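/- Assume Ivanov's twist inequality: for t = t₁^{n₁}⋯t_m^{n_m} a product of powers of Dehn twists about disjoint curves α₁,…,α_m, and all curves β, γ, one has Σᵢ (|nᵢ| − 2)·i(γ, αᵢ)·i(αᵢ, β) ≤ i(t(γ), β) + i(γ, β). Suppose t fixes a curve β_j with i(α_j, β_j) ≠ 0 for each j, in the sense that t^k(β_j) = β_j for all k ≥ 1. Then n_j = 0 for every j; i.e., t is the identity element of the free abelian group generated by the twists. -/
import Mathlib


/-- Abstract form of Corollary: let `I` be the geometric intersection number,
`α₁, …, α_m` pairwise disjoint curves, `t k` the `k`-th power of the multitwist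
`t = t₁^{n₁}⋯t_m^{n_m}` (so `t^k` has exponents `nᵢ·k`), satisfying Ivanov's twist
inequality `Σᵢ (|nᵢ·k| − 2)·I(γ,αᵢ)·I(αᵢ,β) ≤ I(t^k(γ), β) + I(γ,β)`. If for each
`j` there is a curve `β_j` with `I(α_j, β_j) ≠ 0` fixed by all powers `t^k`, then
every exponent `n_j` is zero. -/
theorem multitwist_trivial_of_fixes_transversals
    {C : Type*} (I : C → C → ℝ)
    (hsymm : ∀ a b : C, I a b = I b a)
    (hnonneg : ∀ a b : C, 0 ≤ I a b)
    (hself : ∀ a : C, I a a = 0)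
    {m : ℕ} (α : Fin m → C)
    (hdisj : ∀ i j : Fin m, i ≠ j → I (α i) (α j) = 0)
    (n : Fin m → ℤ) (t : ℕ → C → C)
    (htwist : ∀ (k : ℕ) (β γ : C),
      (∑ i : Fin m, (|((n i : ℝ)) * (k : ℝ)| - 2) * I γ (α i) * I (α i) β)
        ≤ I (t k γ) β + I γ β)
    (β : Fin m → C) (hint : ∀ j : Fin m, I (α j) (β j) ≠ 0)
    (hfix : ∀ (k : ℕ), 1 ≤ k → ∀ j : Fin m, t k (β j) = β j) :
    ∀ j : Fin m, n j = 0 := by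
  intro j
  by_contra hnj
  set a : Fin m → ℝ := fun i => I (β j) (α i) * I (α i) (β j) with ha
  have hapos : ∀ i, 0 ≤ a i := fun i => mul_nonneg (hnonneg _ _) (hnonneg _ _)
  have haj : 0 < a j := by
    have := hint j
    have h1 : 0 < I (α j) (β j) := lt_of_le_of_ne (hnonneg _ _) (Ne.symm this)
    have : a j = I (α j) (β j) * I (α j) (β j) := by rw [ha]; simp [hsymm]
    rw [this]; positivity
  set S : ℝ := ∑ i : Fin m, a i with hS
  have hSnn : 0 ≤ S := Finset.sum_nonneg fun i _ => hapos i
  -- key bound: for all k ≥ 1, k * a j ≤ 2 * S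
  have key : ∀ k : ℕ, 1 ≤ k → (k : ℝ) * a j ≤ 2 * S := by
    intro k hk
    have h := htwist k (β j) (β j)
    rw [hfix k hk j, hself] at h
    -- h : ∑ i, (|n i * k| - 2) * a i ≤ 0
    have hsum : ∑ i : Fin m, (|((n i : ℝ)) * (k : ℝ)| - 2) * a i ≤ 0 := by
      simpa [ha, mul_assoc] using h
    have hsplit : ∑ i : Fin m, (|((n i : ℝ)) * (k : ℝ)| - 2) * a i
        = (∑ i : Fin m, |((n i : ℝ)) * (k : ℝ)| * a i) - 2 * S := by
      rw [hS, Finset.mul_sum, ← Finset.sum_sub_distrib]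
      congr 1; ext i; ring
    have h2 : ∑ i : Fin m, |((n i : ℝ)) * (k : ℝ)| * a i ≤ 2 * S := by
      linarith [hsplit ▸ hsum]
    have hterm : (k : ℝ) * a j ≤ |((n j : ℝ)) * (k : ℝ)| * a j := by
      apply mul_le_mul_of_nonneg_right _ (hapos j)
      rw [abs_mul, abs_of_nonneg (by positivity : (0:ℝ) ≤ (k:ℝ))]
      have : (1:ℝ) ≤ |(n j : ℝ)| := by
        rw [← Int.cast_abs]
        exact_mod_cast Int.one_le_abs hnj
      have hk1 : (1:ℝ) ≤ (k:ℝ) := by exact_mod_cast hk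
      nlinarith
    have hle : |((n j : ℝ)) * (k : ℝ)| * a j ≤ ∑ i : Fin m, |((n i : ℝ)) * (k : ℝ)| * a i := by
      apply Finset.single_le_sum (f := fun i => |((n i : ℝ)) * (k : ℝ)| * a i)
        (fun i _ => mul_nonneg (abs_nonneg _) (hapos i)) (Finset.mem_univ j)
    linarith
  obtain ⟨k, hk⟩ := exists_nat_gt (2 * S / a j)
  have hk1 : 1 ≤ k + 1 := Nat.le_add_left 1 k
  have := key (k + 1) hk1
  have hklt : 2 * S / a j < (k + 1 : ℕ) := by
    push_cast; push_cast at hk; linarith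
  rw [div_lt_iff₀ haj] at hklt
  linarith
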